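/- arXiv:1305.1062 — 3 statements merged into one kernel-verified Lean document; each statement's English description precedes it below -/
import Mathlib

section
/- If A is an n × n integer matrix with nonzero determinant, then the direct limit of the system ℤ^n → ℤ^n → ℤ^n → ⋯ with all maps equal to A is isomorphic to the subgroup ⋃_{k∈ℕ} A^{−k} ℤ^n of (ℤ[1/det A])^n. -/
open Matrix

/-- For an `n × n` integer matrix `A` with nonzero determinant, the direct limit of the
constant system `ℤⁿ →A→ ℤⁿ →A→ ⋯` is isomorphic to the subgroup `⋃ₖ A⁻ᵏℤⁿ` of `ℚⁿ`,
where `A⁻ᵏℤⁿ = {x ∈ ℚⁿ ∣ Aᵏx ∈ ℤⁿ}`. -/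
theorem directLimit_of_invertible_det
    (n : ℕ) (A : Matrix (Fin n) (Fin n) ℤ) (hA : A.det ≠ 0) :
    Nonempty
      ((Module.DirectLimit (fun _ : ℕ => Fin n → ℤ)
          (fun i j _ => (A.mulVecLin ^ (j - i) : (Fin n → ℤ) →ₗ[ℤ] (Fin n → ℤ))))
        ≃+
       (AddSubgroup.closure {x : Fin n → ℚ | ∃ (k : ℕ) (y : Fin n → ℤ),
          ((A.map (Int.cast : ℤ → ℚ)) ^ k).mulVec x = fun i => (y i : ℚ)})) := by
  classical
  set Aq : Matrix (Fin n) (Fin n) ℚ := A.map (Int.cast : ℤ → ℚ) with hAqdef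
  have hdet : IsUnit Aq.det := by
    rw [isUnit_iff_ne_zero]
    have : Aq.det = ((A.det : ℤ) : ℚ) := by
      rw [hAqdef, show (Int.cast : ℤ → ℚ) = ⇑(Int.castRingHom ℚ) from rfl,
        ← RingHom.mapMatrix_apply, ← RingHom.map_det]
    rw [this]
    exact_mod_cast hA
  have hdetk : ∀ k : ℕ, IsUnit (Aq ^ k).det := fun k => by
    rw [Matrix.det_pow]; exact hdet.pow k
  -- the componentwise cast map
  let c : (Fin n → ℤ) →ₗ[ℤ] (Fin n → ℚ) :=
    { toFun := fun x i => (x i : ℚ)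
      map_add' := by intro x y; funext i; simp [Pi.add_apply]
      map_smul' := by intro m x; funext i; simp [zsmul_eq_mul] }
  have hc_inj : Function.Injective c := by
    intro x y h
    funext i
    have := congrFun h i
    simp only [c, LinearMap.coe_mk, AddHom.coe_mk] at this
    exact_mod_cast this
  -- cast commutes with mulVec
  have hcast : ∀ (m : ℕ) (x : Fin n → ℤ), c ((A ^ m).mulVec x) = (Aq ^ m).mulVec (c x) := by
    intro m x
    have hmap : Aq ^ m = (A ^ m).map (Int.cast : ℤ → ℚ) := by
      rw [hAqdef, show (Int.cast : ℤ → ℚ) = ⇑(Int.castRingHom ℚ) from rfl,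
        ← RingHom.mapMatrix_apply, ← map_pow]
      rfl
    funext i
    simp only [hmap, Matrix.mulVec, dotProduct, Matrix.map_apply, c, LinearMap.coe_mk,
      AddHom.coe_mk]
    push_cast
    rfl
  have hpow : ∀ (m : ℕ) (x : Fin n → ℤ), (A.mulVecLin ^ m) x = (A ^ m).mulVec x := by
    intro m
    induction m with
    | zero => intro x; simp
    | succ k ih =>
        intro x
        rw [pow_succ, pow_succ]
        simp only [Module.End.mul_apply, ih]
        rw [Matrix.mulVecLin_apply, ← Matrix.mulVec_mulVec]
  -- the component maps into ℚⁿ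
  let g : ∀ _ : ℕ, (Fin n → ℤ) →ₗ[ℤ] (Fin n → ℚ) := fun k =>
    (((Aq ^ k)⁻¹).mulVecLin.restrictScalars ℤ) ∘ₗ c
  have hg_apply : ∀ (k : ℕ) (x : Fin n → ℤ), g k x = ((Aq ^ k)⁻¹).mulVec (c x) := fun _ _ => rfl
  have Hg : ∀ (i j : ℕ) (hij : i ≤ j) (x : Fin n → ℤ),
      g j ((A.mulVecLin ^ (j - i)) x) = g i x := by
    intro i j hij x
    rw [hg_apply, hg_apply, hpow, hcast, Matrix.mulVec_mulVec]
    have hj : Aq ^ j = Aq ^ (j - i) * Aq ^ i := by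
      rw [← pow_add, Nat.sub_add_cancel hij]
    rw [hj, Matrix.mul_inv_rev, Matrix.mul_assoc, Matrix.nonsing_inv_mul _ (hdetk _),
      Matrix.mul_one]
  have hg_inj : ∀ k, Function.Injective (g k) := by
    intro k x y h
    apply hc_inj
    have : (Aq ^ k).mulVec (((Aq ^ k)⁻¹).mulVec (c x))
        = (Aq ^ k).mulVec (((Aq ^ k)⁻¹).mulVec (c y)) := by
      rw [← hg_apply, ← hg_apply, h]
    rwa [Matrix.mulVec_mulVec, Matrix.mulVec_mulVec, Matrix.mul_nonsing_inv _ (hdetk _),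
      Matrix.one_mulVec, Matrix.one_mulVec] at this
  let F := Module.DirectLimit.lift ℤ ℕ (fun _ : ℕ => Fin n → ℤ)
    (fun i j _ => (A.mulVecLin ^ (j - i))) g Hg
  set S : Set (Fin n → ℚ) := {x : Fin n → ℚ | ∃ (k : ℕ) (y : Fin n → ℤ),
      (Aq ^ k).mulVec x = fun i => (y i : ℚ)} with hSdef
  have hmem : ∀ z, F z ∈ AddSubgroup.closure S := by
    intro z
    induction z using Module.DirectLimit.induction_on with
    | ih k x =>
      apply AddSubgroup.subset_closure
      rw [Module.DirectLimit.lift_of]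
      refine ⟨k, x, ?_⟩
      rw [hg_apply, Matrix.mulVec_mulVec, Matrix.mul_nonsing_inv _ (hdetk _), Matrix.one_mulVec]
      rfl
  let F' : Module.DirectLimit (fun _ : ℕ => Fin n → ℤ)
      (fun i j _ => (A.mulVecLin ^ (j - i) : (Fin n → ℤ) →ₗ[ℤ] (Fin n → ℤ))) →+
      (AddSubgroup.closure S) :=
    AddMonoidHom.codRestrict F.toAddMonoidHom _ hmem
  refine ⟨AddEquiv.ofBijective F' ⟨?_, ?_⟩⟩
  · intro x y h
    have : F x = F y := congrArg Subtype.val h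
    exact Module.DirectLimit.lift_injective _ _ hg_inj this
  · rintro ⟨x, hx⟩
    have hsub : AddSubgroup.closure S ≤ F.toAddMonoidHom.range := by
      rw [AddSubgroup.closure_le]
      rintro v ⟨k, y, hky⟩
      refine ⟨Module.DirectLimit.of ℤ ℕ (fun _ : ℕ => Fin n → ℤ)
        (fun i j _ => (A.mulVecLin ^ (j - i))) k y, ?_⟩
      have hcy : c y = (Aq ^ k).mulVec v := by
        funext i; rw [hky]; rfl
      have : F (Module.DirectLimit.of ℤ ℕ (fun _ : ℕ => Fin n → ℤ)
          (fun i j _ => (A.mulVecLin ^ (j - i))) k y) = v := by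
        rw [Module.DirectLimit.lift_of, hg_apply, hcy, Matrix.mulVec_mulVec,
          Matrix.nonsing_inv_mul _ (hdetk _), Matrix.one_mulVec]
      exact this
    obtain ⟨z, hz⟩ := hsub hx
    exact ⟨z, Subtype.ext hz⟩
end

section
/- Let U be an n × n upper triangular integer matrix with nonzero diagonal entries λ_1, …, λ_n, and D = diag(λ_1, …, λ_n). If V_k := U^k D^{−k} is an integer matrix for all k ∈ ℕ, then the direct limit lim→(U, ℤ^n) is isomorphic to lim→(D, ℤ^n), which is isomorphic to ℤ[1/λ_1] ⊕ ⋯ ⊕ ℤ[1/λ_n]. -/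
/-- `ℤ[1/d] = ⋃ᵢ (1/dⁱ)ℤ`, the subgroup of ℚ generated by the powers `1/dⁱ`. -/
def Zinv (d : ℤ) : AddSubgroup ℚ :=
  AddSubgroup.closure {q : ℚ | ∃ i : ℕ, q = ((d : ℚ) ^ i)⁻¹}

lemma mem_Zinv_iff {d : ℤ} (hd : d ≠ 0) {q : ℚ} :
    q ∈ Zinv d ↔ ∃ (k : ℕ) (m : ℤ), q = m * ((d : ℚ) ^ k)⁻¹ := by
  have hdq : (d : ℚ) ≠ 0 := Int.cast_ne_zero.2 hd
  constructor
  · intro hq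
    refine AddSubgroup.closure_induction ?_ ?_ ?_ ?_ hq
    · rintro x ⟨i, rfl⟩; exact ⟨i, 1, by simp⟩
    · exact ⟨0, 0, by simp⟩
    · rintro x y _ _ ⟨k₁, m₁, rfl⟩ ⟨k₂, m₂, rfl⟩
      refine ⟨k₁ + k₂, m₁ * d ^ k₂ + m₂ * d ^ k₁, ?_⟩
      have h1 : (d : ℚ) ^ k₁ ≠ 0 := pow_ne_zero _ hdq
      have h2 : (d : ℚ) ^ k₂ ≠ 0 := pow_ne_zero _ hdq
      push_cast
      rw [pow_add]
      field_simp
    · rintro x _ ⟨k, m, rfl⟩; exact ⟨k, -m, by push_cast; ring⟩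
  · rintro ⟨k, m, rfl⟩
    have : ((d : ℚ) ^ k)⁻¹ ∈ Zinv d := AddSubgroup.subset_closure ⟨k, rfl⟩
    simpa [zsmul_eq_mul] using zsmul_mem this m

lemma mulVecLin_pow {n : ℕ} {R : Type*} [CommRing R] (A : Matrix (Fin n) (Fin n) R) (m : ℕ) :
    (A.mulVecLin ^ m : (Fin n → R) →ₗ[R] (Fin n → R)) = (A ^ m).mulVecLin := by
  induction m with
  | zero => rw [pow_zero, pow_zero, Matrix.mulVecLin_one]; rfl
  | succ m ih =>
      rw [pow_succ, pow_succ, Matrix.mulVecLin_mul, ih]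
      rfl

/-- If `U` is upper triangular over ℤ with nonzero diagonal `λ₁,…,λₙ`, `D = diag(λ₁,…,λₙ)`,
and each `Vₖ = UᵏD⁻ᵏ` has integer entries, then `lim→(U,ℤⁿ) ≅ lim→(D,ℤⁿ) ≅ ⊕ᵢ ℤ[1/λᵢ]`. -/
theorem directLimit_upper_triangular
    (n : ℕ) (U : Matrix (Fin n) (Fin n) ℤ)
    (hUt : ∀ i j : Fin n, j < i → U i j = 0)
    (hdiag : ∀ i : Fin n, U i i ≠ 0)
    (V : ℕ → Matrix (Fin n) (Fin n) ℤ)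
    (hV : ∀ k : ℕ, (V k).map (Int.cast : ℤ → ℚ) =
      (U.map (Int.cast : ℤ → ℚ)) ^ k *
        ((Matrix.diagonal fun i => ((U i i : ℚ)))⁻¹) ^ k) :
    Nonempty
      ((Module.DirectLimit (fun _ : ℕ => Fin n → ℤ)
          (fun i j _ => (U.mulVecLin ^ (j - i) : (Fin n → ℤ) →ₗ[ℤ] (Fin n → ℤ))))
        ≃+
       (Module.DirectLimit (fun _ : ℕ => Fin n → ℤ)
          (fun i j _ => ((Matrix.diagonal fun i => U i i).mulVecLin ^ (j - i) :
            (Fin n → ℤ) →ₗ[ℤ] (Fin n → ℤ))))) ∧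
    Nonempty
      ((Module.DirectLimit (fun _ : ℕ => Fin n → ℤ)
          (fun i j _ => ((Matrix.diagonal fun i => U i i).mulVecLin ^ (j - i) :
            (Fin n → ℤ) →ₗ[ℤ] (Fin n → ℤ))))
        ≃+ (∀ i : Fin n, Zinv (U i i))) := by
  classical
  set D : Matrix (Fin n) (Fin n) ℤ := Matrix.diagonal fun i => U i i with hD
  set Uq : Matrix (Fin n) (Fin n) ℚ := U.map (Int.cast : ℤ → ℚ) with hUq
  set Dq : Matrix (Fin n) (Fin n) ℚ := Matrix.diagonal fun i => ((U i i : ℚ)) with hDqdef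
  have hprod : (∏ i : Fin n, (U i i : ℚ)) ≠ 0 :=
    Finset.prod_ne_zero_iff.2 fun i _ => Int.cast_ne_zero.2 (hdiag i)
  have hDqdet : Dq.det = ∏ i : Fin n, (U i i : ℚ) := Matrix.det_diagonal
  have hDqunit : IsUnit Dq.det := by rw [hDqdet]; exact (hprod).isUnit
  -- the cast ring hom on matrices
  set C : Matrix (Fin n) (Fin n) ℤ →+* Matrix (Fin n) (Fin n) ℚ :=
    (Int.castRingHom ℚ).mapMatrix with hC
  have hCapp : ∀ M : Matrix (Fin n) (Fin n) ℤ, C M = M.map (Int.cast : ℤ → ℚ) := fun M => rfl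
  have hCinj : Function.Injective C := by
    intro A B h
    ext i j
    have := congrArg (fun M => M i j) h
    exact Int.cast_injective this
  have hCD : C D = Dq := by
    rw [hCapp, hD, hDqdef, Matrix.diagonal_map (by simp)]
  -- key commutation identity over ℤ
  have hcomm : ∀ i j : ℕ, i ≤ j → V j * D ^ (j - i) = U ^ (j - i) * V i := by
    intro i j hij
    apply hCinj
    rw [map_mul, map_mul, map_pow, map_pow, hCD, hCapp, hCapp, hCapp, hV i, hV j]
    have hsub : i + (j - i) = j := Nat.add_sub_cancel' hij
    have h1 : (Dq⁻¹) ^ (j - i) * Dq ^ (j - i) = 1 := by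
      rw [Matrix.inv_pow', Matrix.nonsing_inv_mul _ (by simpa using hDqunit.pow (j - i))]
    calc Uq ^ j * Dq⁻¹ ^ j * Dq ^ (j - i)
        = Uq ^ j * (Dq⁻¹ ^ i * (Dq⁻¹ ^ (j - i) * Dq ^ (j - i))) := by
          rw [← mul_assoc (Dq⁻¹ ^ i), ← pow_add, hsub, mul_assoc]
      _ = Uq ^ j * Dq⁻¹ ^ i := by rw [h1, mul_one]
      _ = Uq ^ (j - i) * (Uq ^ i * Dq⁻¹ ^ i) := by
          rw [← mul_assoc, ← pow_add, Nat.sub_add_cancel hij]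
  -- each V k has unit determinant
  have hVunit : ∀ k, IsUnit (V k).det := by
    intro k
    have hUqdet : Uq.det = ∏ i : Fin n, (U i i : ℚ) := by
      rw [Matrix.det_of_upperTriangular (M := Uq) (fun i j h => by
        simp [hUq, Matrix.map_apply, hUt i j h])]
      simp [hUq, Matrix.map_apply]
    have : ((V k).det : ℚ) = 1 := by
      have hmap : ((V k).det : ℚ) = ((V k).map (Int.cast : ℤ → ℚ)).det := by
        simpa [RingHom.mapMatrix_apply] using (Int.castRingHom ℚ).map_det (V k)
      rw [hmap, hV k, Matrix.det_mul, Matrix.det_pow, Matrix.det_pow, hUqdet,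
        Matrix.det_nonsing_inv, hDqdet, Ring.inverse_eq_inv]
      field_simp
      rw [← mul_pow, mul_one_div_cancel hprod, one_pow]
    have : (V k).det = 1 := by exact_mod_cast this
    simp [this]
  -- Part 1 : lim(U) ≃ lim(D)
  let e : ∀ k : ℕ, (Fin n → ℤ) ≃ₗ[ℤ] (Fin n → ℤ) := fun k =>
    LinearEquiv.ofLinear (V k).mulVecLin ((V k)⁻¹).mulVecLin
      (by rw [← Matrix.mulVecLin_mul, Matrix.mul_nonsing_inv _ (hVunit k),
            Matrix.mulVecLin_one])
      (by rw [← Matrix.mulVecLin_mul, Matrix.nonsing_inv_mul _ (hVunit k),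
            Matrix.mulVecLin_one])
  have he : ∀ (i j : ℕ) (h : i ≤ j),
      (e j).toLinearMap ∘ₗ ((D.mulVecLin ^ (j - i) : (Fin n → ℤ) →ₗ[ℤ] (Fin n → ℤ)))
        = (U.mulVecLin ^ (j - i) : (Fin n → ℤ) →ₗ[ℤ] (Fin n → ℤ)) ∘ₗ (e i).toLinearMap := by
    intro i j h
    show (V j).mulVecLin ∘ₗ _ = _ ∘ₗ (V i).mulVecLin
    rw [mulVecLin_pow, mulVecLin_pow, ← Matrix.mulVecLin_mul, ← Matrix.mulVecLin_mul,
      hcomm i j h]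
  refine ⟨⟨((Module.DirectLimit.congr e he).symm).toAddEquiv⟩, ?_⟩
  -- Part 2 : lim(D) ≃ ∏ᵢ ℤ[1/λᵢ]
  have memZ : ∀ (k : ℕ) (a : Fin n) (z : ℤ),
      (z : ℚ) * ((U a a : ℚ) ^ k)⁻¹ ∈ Zinv (U a a) := by
    intro k a z
    exact (mem_Zinv_iff (hdiag a)).2 ⟨k, z, rfl⟩
  set g : ∀ _ : ℕ, (Fin n → ℤ) →ₗ[ℤ] (∀ a : Fin n, Zinv (U a a)) := fun k =>
    ({ toFun := fun x a => ⟨(x a : ℚ) * ((U a a : ℚ) ^ k)⁻¹, memZ k a (x a)⟩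
       map_zero' := by ext a; simp
       map_add' := fun x y => by
         ext a
         simp only [Pi.add_apply, AddSubgroup.coe_add]
         push_cast
         ring } :
      (Fin n → ℤ) →+ (∀ a : Fin n, Zinv (U a a))).toIntLinearMap with hg
  have hDpow : ∀ (m : ℕ) (x : Fin n → ℤ) (a : Fin n),
      ((D.mulVecLin ^ m : (Fin n → ℤ) →ₗ[ℤ] (Fin n → ℤ)) x) a = (U a a) ^ m * x a := by
    intro m x a
    rw [mulVecLin_pow, hD, Matrix.diagonal_pow]
    simp [Matrix.mulVecLin_apply, Matrix.mulVec_diagonal]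
  have Hg : ∀ (i j : ℕ) (hij : i ≤ j) (x : Fin n → ℤ),
      g j (((D.mulVecLin ^ (j - i) : (Fin n → ℤ) →ₗ[ℤ] (Fin n → ℤ))) x) = g i x := by
    intro i j hij x
    ext a
    show ((((D.mulVecLin ^ (j - i) : (Fin n → ℤ) →ₗ[ℤ] (Fin n → ℤ)) x) a : ℤ) : ℚ)
        * ((U a a : ℚ) ^ j)⁻¹ = (x a : ℚ) * ((U a a : ℚ) ^ i)⁻¹
    rw [hDpow]
    have hne : (U a a : ℚ) ≠ 0 := Int.cast_ne_zero.2 (hdiag a)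
    have h1 : (U a a : ℚ) ^ j ≠ 0 := pow_ne_zero _ hne
    have h2 : (U a a : ℚ) ^ i ≠ 0 := pow_ne_zero _ hne
    push_cast
    field_simp
    rw [mul_comm ((U a a : ℚ) ^ (j - i)) (x a : ℚ), mul_assoc, ← pow_add,
      Nat.sub_add_cancel hij, mul_comm]
  set Φ := Module.DirectLimit.lift ℤ ℕ _ _ g Hg with hΦ
  have hinj : Function.Injective Φ := by
    apply Module.DirectLimit.lift_injective
    intro k x y hxy
    funext a
    have := congrFun hxy a
    rw [Subtype.ext_iff] at this
    have hne : ((U a a : ℚ) ^ k)⁻¹ ≠ 0 :=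
      inv_ne_zero (pow_ne_zero _ (Int.cast_ne_zero.2 (hdiag a)))
    have : (x a : ℚ) = (y a : ℚ) := mul_right_cancel₀ hne this
    exact_mod_cast this
  have hsurj : Function.Surjective Φ := by
    intro y
    choose k m hm using fun a => (mem_Zinv_iff (hdiag a)).1 (y a).2
    set K : ℕ := Finset.univ.sup k with hK
    refine ⟨Module.DirectLimit.of ℤ ℕ _ _ K (fun a => m a * (U a a) ^ (K - k a)), ?_⟩
    rw [hΦ, Module.DirectLimit.lift_of]
    funext a
    ext
    show ((m a * (U a a) ^ (K - k a) : ℤ) : ℚ) * ((U a a : ℚ) ^ K)⁻¹ = (y a : ℚ)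
    rw [hm a]
    have hne : (U a a : ℚ) ≠ 0 := Int.cast_ne_zero.2 (hdiag a)
    have hle : k a ≤ K := Finset.le_sup (Finset.mem_univ a)
    have h1 : (U a a : ℚ) ^ K ≠ 0 := pow_ne_zero _ hne
    have h2 : (U a a : ℚ) ^ k a ≠ 0 := pow_ne_zero _ hne
    push_cast
    field_simp
    rw [mul_assoc, ← pow_add, Nat.sub_add_cancel hle]
  exact ⟨(LinearEquiv.ofBijective Φ ⟨hinj, hsurj⟩).toAddEquiv⟩
end

section
/- For the 5 × 5 integer matrix A with rows (2,2,2,1,1), (0,1,0,0,0), (1,2,3,1,1), (1,2,2,2,1), (1,2,2,1,2), the direct limit of the system ℤ⁵ → ℤ⁵ → ⋯ with all maps equal to A is isomorphic to ℤ[1/6] ⊕ ℤ⁴. -/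
namespace DLaux

/-- The explicit matrix. -/
def Amat : Matrix (Fin 5) (Fin 5) ℤ :=
  !![2, 2, 2, 1, 1;
     0, 1, 0, 0, 0;
     1, 2, 3, 1, 1;
     1, 2, 2, 2, 1;
     1, 2, 2, 1, 2]

lemma mulVec_eval (x : Fin 5 → ℤ) :
    Amat.mulVecLin x = ![2*x 0 + 2*x 1 + 2*x 2 + x 3 + x 4,
      x 1,
      x 0 + 2*x 1 + 3*x 2 + x 3 + x 4,
      x 0 + 2*x 1 + 2*x 2 + 2*x 3 + x 4,
      x 0 + 2*x 1 + 2*x 2 + x 3 + 2*x 4] := by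
  funext i
  fin_cases i <;>
    simp [Amat, Matrix.mulVecLin_apply, Matrix.mulVec, dotProduct,
      Fin.sum_univ_five]

/-- `c n = (6^n - 1)/5` defined recursively. -/
def c : ℕ → ℤ
  | 0 => 0
  | n + 1 => 6 * c n + 1

lemma mem_Zinv6 (z : ℤ) (n : ℕ) : (z : ℚ) * ((6:ℚ)^n)⁻¹ ∈ Zinv 6 := by
  have h : ((6:ℚ)^n)⁻¹ ∈ Zinv 6 := AddSubgroup.subset_closure ⟨n, by norm_num⟩
  simpa [zsmul_eq_mul] using AddSubgroup.zsmul_mem _ h z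

/-- Every element of `ℤ[1/6]` has the form `z/6^n`. -/
lemma Zinv6_eq (q : ℚ) (hq : q ∈ Zinv 6) : ∃ (z : ℤ) (n : ℕ), q = (z : ℚ) * ((6:ℚ)^n)⁻¹ := by
  induction hq using AddSubgroup.closure_induction with
  | mem q hq =>
    obtain ⟨i, rfl⟩ := hq
    exact ⟨1, i, by norm_num⟩
  | zero => exact ⟨0, 0, by norm_num⟩
  | add q r _ _ hq hr =>
    obtain ⟨z, n, rfl⟩ := hq
    obtain ⟨w, m, rfl⟩ := hr
    refine ⟨z * 6^m + w * 6^n, n + m, ?_⟩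
    have h6n : ((6:ℚ)^n) ≠ 0 := by positivity
    have h6m : ((6:ℚ)^m) ≠ 0 := by positivity
    rw [pow_add]
    push_cast
    field_simp
    try ring
  | neg q _ hq =>
    obtain ⟨z, n, rfl⟩ := hq
    exact ⟨-z, n, by push_cast; ring⟩

/-- The compatible family of linear maps. -/
noncomputable def g (n : ℕ) : (Fin 5 → ℤ) →ₗ[ℤ] (↥(Zinv 6) × (Fin 4 → ℤ)) :=
  AddMonoidHom.toIntLinearMap
  { toFun := fun x => (⟨((x 0 - c n * (-4 * x 0 + 2 * x 1 + 2 * x 2 + x 3 + x 4) : ℤ) : ℚ)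
        * ((6:ℚ)^n)⁻¹, mem_Zinv6 _ n⟩,
      ![x 1, x 2 - x 0, x 3 - x 0, x 4 - x 0])
    map_zero' := by
      refine Prod.ext (Subtype.ext ?_) ?_
      · simp
      · funext j; fin_cases j <;> simp
    map_add' := fun x y => by
      refine Prod.ext (Subtype.ext ?_) ?_
      · simp only [Prod.fst_add, AddSubgroup.coe_add, Pi.add_apply]
        push_cast
        ring
      · funext j; fin_cases j <;> simp [Prod.snd_add] <;> ring }

@[simp] lemma g_fst (n : ℕ) (x : Fin 5 → ℤ) :
    ((g n x).1 : ℚ) = ((x 0 - c n * (-4 * x 0 + 2 * x 1 + 2 * x 2 + x 3 + x 4) : ℤ) : ℚ)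
      * ((6:ℚ)^n)⁻¹ := rfl

@[simp] lemma g_snd (n : ℕ) (x : Fin 5 → ℤ) :
    (g n x).2 = ![x 1, x 2 - x 0, x 3 - x 0, x 4 - x 0] := rfl

lemma step (n : ℕ) (x : Fin 5 → ℤ) : g (n + 1) (Amat.mulVecLin x) = g n x := by
  refine Prod.ext (Subtype.ext ?_) ?_
  · rw [g_fst, g_fst, mulVec_eval]
    have h6 : ((6:ℚ)^(n+1))⁻¹ = ((6:ℚ)^n)⁻¹ * 6⁻¹ := by rw [pow_succ, mul_inv]
    simp only [c, Matrix.cons_val_zero, Matrix.cons_val_one, Matrix.head_cons,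
      Matrix.cons_val_two, Matrix.tail_cons, Matrix.cons_val_three, Matrix.cons_val_four]
    rw [h6]
    push_cast
    field_simp
    ring
  · rw [g_snd, g_snd, mulVec_eval]
    funext j
    fin_cases j <;> simp <;> ring

lemma key (k : ℕ) : ∀ (n : ℕ) (x : Fin 5 → ℤ),
    g (n + k) ((Amat.mulVecLin ^ k) x) = g n x := by
  induction k with
  | zero => intro n x; simp
  | succ k ih =>
    intro n x
    have h1 : (Amat.mulVecLin ^ (k + 1)) x = Amat.mulVecLin ((Amat.mulVecLin ^ k) x) := by
      rw [pow_succ', Module.End.mul_apply]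
    have h2 : n + (k + 1) = (n + k) + 1 := rfl
    rw [h1, h2, step, ih]

lemma compat : ∀ (i j : ℕ) (hij : i ≤ j) (x : Fin 5 → ℤ),
    g j ((Amat.mulVecLin ^ (j - i)) x) = g i x := by
  intro i j hij x
  have := key (j - i) i x
  rwa [Nat.add_sub_cancel' hij] at this

end DLaux

open DLaux in
/-- The direct limit of the constant system `ℤ⁵ →A→ ℤ⁵ →A→ ⋯` for the explicit matrix `A`
is isomorphic to `ℤ[1/6] ⊕ ℤ⁴`. -/
theorem directLimit_explicit_matrix :
    let A : Matrix (Fin 5) (Fin 5) ℤ :=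
      !![2, 2, 2, 1, 1;
         0, 1, 0, 0, 0;
         1, 2, 3, 1, 1;
         1, 2, 2, 2, 1;
         1, 2, 2, 1, 2]
    Nonempty
      ((Module.DirectLimit (fun _ : ℕ => Fin 5 → ℤ)
          (fun i j _ => (A.mulVecLin ^ (j - i) : (Fin 5 → ℤ) →ₗ[ℤ] (Fin 5 → ℤ))))
        ≃+ (Zinv 6 × (Fin 4 → ℤ))) := by
  intro A
  have hA : A = Amat := rfl
  set f : ∀ i j : ℕ, i ≤ j → (Fin 5 → ℤ) →ₗ[ℤ] (Fin 5 → ℤ) :=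
    fun i j _ => (A.mulVecLin ^ (j - i)) with hf
  letI φ : Module.DirectLimit (fun _ : ℕ => Fin 5 → ℤ) f →ₗ[ℤ] (↥(Zinv 6) × (Fin 4 → ℤ)) :=
    Module.DirectLimit.lift ℤ ℕ (fun _ : ℕ => Fin 5 → ℤ) f g
      (by intro i j hij x; exact compat i j hij x)
  have hbij : Function.Bijective φ := by
    constructor
    · rw [injective_iff_map_eq_zero]
      intro z hz
      obtain ⟨i, x, rfl⟩ := Module.DirectLimit.exists_of z
      replace hz : g i x = 0 := (Module.DirectLimit.lift_of ..).symm.trans hz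
      have h2 : (g i x).2 = 0 := by rw [hz]; rfl
      rw [g_snd] at h2
      have e1 : x 1 = 0 := congrFun h2 0
      have e2 : x 2 - x 0 = 0 := congrFun h2 1
      have e3 : x 3 - x 0 = 0 := congrFun h2 2
      have e4 : x 4 - x 0 = 0 := congrFun h2 3
      have h1 : ((g i x).1 : ℚ) = 0 := by rw [hz]; rfl
      rw [g_fst] at h1
      have h6 : ((6:ℚ)^i)⁻¹ ≠ 0 := by positivity
      have hx0 : ((x 0 - c i * (-4 * x 0 + 2 * x 1 + 2 * x 2 + x 3 + x 4) : ℤ) : ℚ) = 0 := by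
        rcases mul_eq_zero.mp h1 with h | h
        · exact h
        · exact absurd h h6
      have hx0' : x 0 - c i * (-4 * x 0 + 2 * x 1 + 2 * x 2 + x 3 + x 4) = 0 := by
        exact_mod_cast hx0
      have : x 0 = 0 := by
        have hx2 : x 2 = x 0 := by omega
        have hx3 : x 3 = x 0 := by omega
        have hx4 : x 4 = x 0 := by omega
        rw [e1, hx2, hx3, hx4] at hx0'
        nlinarith [hx0']
      have hx : x = 0 := by
        funext j
        fin_cases j <;> simp_all <;> omega
      rw [hx]
      exact map_zero _
    · rintro ⟨⟨q, hq⟩, y⟩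
      obtain ⟨z, n, rfl⟩ := Zinv6_eq q hq
      obtain ⟨t, ht⟩ : ∃ t : ℤ, t = z + c n * (2 * y 0 + 2 * y 1 + y 2 + y 3) := ⟨_, rfl⟩
      refine ⟨Module.DirectLimit.of ℤ ℕ (fun _ : ℕ => Fin 5 → ℤ) f n
        ![t, y 0, y 1 + t, y 2 + t, y 3 + t], ?_⟩
      refine (Module.DirectLimit.lift_of ..).trans ?_
      refine Prod.ext (Subtype.ext ?_) ?_
      · rw [g_fst]
        simp only [Matrix.cons_val_zero, Matrix.cons_val_one, Matrix.head_cons,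
          Matrix.cons_val_two, Matrix.tail_cons, Matrix.cons_val_three, Matrix.cons_val_four]
        rw [ht]
        push_cast
        ring
      · rw [g_snd]
        funext j
        fin_cases j <;> simp
  exact ⟨AddEquiv.ofBijective φ.toAddMonoidHom hbij⟩
end
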